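/- For the even symplectic Grassmannian IG(m, 2n), the map sending an index set p = (p₁ < ⋯ < p_m) with p_i + p_j ≠ 2n+1 for all i, j, to λ_j = 2n+1−m−p_j + #{i < j : p_i + p_j > 2n+1}, is a bijection onto the set of (n−m)-strict partitions λ = (λ₁ ≥ ⋯ ≥ λ_m ≥ 0) with λ₁ ≤ 2n−m, with inverse given by p_j = 2n+1−m−λ_j + #{i < j : λ_i + λ_j ≤ 2(n−m) + j − i}. -/
import Mathlib


open Finset

/-- `p` is an index set for the even symplectic Grassmannian `IG(m, 2n)`:
a strictly increasing sequence of integers in `[1, 2n]` with `p i + p j ≠ 2n + 1`. -/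
def IsIndexSetEven (m n : ℕ) (p : Fin m → ℤ) : Prop :=
  StrictMono p ∧ (∀ j, 1 ≤ p j ∧ p j ≤ 2 * n) ∧ ∀ i j, p i + p j ≠ 2 * n + 1

/-- `lam` is an `(n−m)`-strict partition with `m` parts, all parts `≥ 0` and
first part `≤ 2n − m`, indexing Schubert classes of `IG(m, 2n)`. -/
def IsStrictPartitionEven (m n : ℕ) (lam : Fin m → ℤ) : Prop :=
  Antitone lam ∧ (∀ j, 0 ≤ lam j) ∧ (∀ j, lam j ≤ 2 * n - m) ∧
    ∀ (j : Fin m) (h : (j : ℕ) + 1 < m),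
      (n : ℤ) - m < lam j → lam ⟨(j : ℕ) + 1, h⟩ < lam j

/-- `λ_j = 2n+1−m−p_j + #{i < j : p_i + p_j > 2n+1}`. -/
def idxToPartEven (m n : ℕ) (p : Fin m → ℤ) : Fin m → ℤ :=
  fun j => 2 * n + 1 - m - p j +
    ((univ.filter fun i : Fin m => i < j ∧ 2 * (n : ℤ) + 1 < p i + p j).card : ℤ)

/-- `p_j = 2n+1−m−λ_j + #{i < j : λ_i + λ_j ≤ 2(n−m) + j − i}`. -/
def partToIdxEven (m n : ℕ) (lam : Fin m → ℤ) : Fin m → ℤ :=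
  fun j => 2 * n + 1 - m - lam j +
    ((univ.filter fun i : Fin m =>
      i < j ∧ lam i + lam j ≤ 2 * ((n : ℤ) - m) + ((j : ℕ) : ℤ) - ((i : ℕ) : ℤ)).card : ℤ)

namespace EvenSympAux

variable {m n : ℕ}

/-! ### Generic helpers -/

lemma card_filter_lt (j : Fin m) : ((univ.filter fun i : Fin m => i < j).card) = (j : ℕ) := by
  rw [show (univ.filter fun i : Fin m => i < j) = Finset.Iio j by ext i; simp, Fin.card_Iio]

lemma card_filter_Ioo (i j : Fin m) :
    ((univ.filter fun l : Fin m => i < l ∧ l < j).card) = (j : ℕ) - (i : ℕ) - 1 := by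
  rw [show (univ.filter fun l : Fin m => i < l ∧ l < j) = Finset.Ioo i j by ext l; simp,
    Fin.card_Ioo]

lemma card_filter_Ico (i j : Fin m) :
    ((univ.filter fun l : Fin m => i ≤ l ∧ l < j).card) = (j : ℕ) - (i : ℕ) := by
  rw [show (univ.filter fun l : Fin m => i ≤ l ∧ l < j) = Finset.Ico i j by ext l; simp,
    Fin.card_Ico]

lemma card_le_Icc {T : Finset (Fin m)} {f : Fin m → ℤ} (hinj : Set.InjOn f T) {a b : ℤ}
    (hab : a ≤ b + 1) (h : ∀ i ∈ T, a ≤ f i ∧ f i ≤ b) : (T.card : ℤ) ≤ b + 1 - a := by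
  have h1 : T.card ≤ (Finset.Icc a b).card :=
    Finset.card_le_card_of_injOn f (fun i hi => Finset.mem_Icc.mpr ⟨(h i hi).1, (h i hi).2⟩) hinj
  rw [Int.card_Icc] at h1
  omega

lemma step_le {f : Fin m → ℤ}
    (h : ∀ (j : Fin m) (hj : (j : ℕ) + 1 < m), f j + 1 ≤ f ⟨(j : ℕ) + 1, hj⟩) :
    ∀ (d : ℕ) (l i : Fin m), (i : ℕ) = (l : ℕ) + d → f l + d ≤ f i := by
  intro d
  induction d with
  | zero => intro l i hd; have hli : l = i := Fin.ext (by omega); rw [hli]; simp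
  | succ d ih =>
    intro l i hd
    have hlm : (l : ℕ) + 1 < m := by have := i.isLt; omega
    have h1 := h l hlm
    have h2 : f ⟨(l : ℕ) + 1, hlm⟩ + d ≤ f i :=
      ih ⟨(l : ℕ) + 1, hlm⟩ i (show (i : ℕ) = (l : ℕ) + 1 + d by omega)
    push_cast
    push_cast at h2
    linarith

lemma step_le' {f : Fin m → ℤ}
    (h : ∀ (j : Fin m) (hj : (j : ℕ) + 1 < m), f j ≤ f ⟨(j : ℕ) + 1, hj⟩) :
    ∀ (d : ℕ) (l i : Fin m), (i : ℕ) = (l : ℕ) + d → f l ≤ f i := by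
  intro d
  induction d with
  | zero => intro l i hd; have hli : l = i := Fin.ext (by omega); rw [hli]
  | succ d ih =>
    intro l i hd
    have hlm : (l : ℕ) + 1 < m := by have := i.isLt; omega
    have h1 := h l hlm
    have h2 : f ⟨(l : ℕ) + 1, hlm⟩ ≤ f i :=
      ih ⟨(l : ℕ) + 1, hlm⟩ i (show (i : ℕ) = (l : ℕ) + 1 + d by omega)
    linarith

lemma strictMono_of_adj {f : Fin m → ℤ}
    (h : ∀ (j : Fin m) (hj : (j : ℕ) + 1 < m), f j < f ⟨(j : ℕ) + 1, hj⟩) : StrictMono f := by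
  intro a b hab
  have hab' : (a : ℕ) < (b : ℕ) := hab
  have := step_le (f := f) (fun j hj => by have := h j hj; omega) ((b : ℕ) - (a : ℕ)) a b
    (by omega)
  have hd : (1 : ℤ) ≤ ((b : ℕ) - (a : ℕ) : ℕ) := by
    have : 1 ≤ (b : ℕ) - (a : ℕ) := by omega
    exact_mod_cast this
  linarith

lemma step_ge {f : Fin m → ℤ}
    (h : ∀ (j : Fin m) (hj : (j : ℕ) + 1 < m), f ⟨(j : ℕ) + 1, hj⟩ ≤ f j) :
    ∀ (d : ℕ) (l i : Fin m), (i : ℕ) = (l : ℕ) + d → f i ≤ f l := by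
  intro d
  induction d with
  | zero => intro l i hd; have hli : l = i := Fin.ext (by omega); rw [hli]
  | succ d ih =>
    intro l i hd
    have hlm : (l : ℕ) + 1 < m := by have := i.isLt; omega
    have h1 := h l hlm
    have h2 : f i ≤ f ⟨(l : ℕ) + 1, hlm⟩ :=
      ih ⟨(l : ℕ) + 1, hlm⟩ i (show (i : ℕ) = (l : ℕ) + 1 + d by omega)
    linarith

lemma antitone_of_adj {f : Fin m → ℤ}
    (h : ∀ (j : Fin m) (hj : (j : ℕ) + 1 < m), f ⟨(j : ℕ) + 1, hj⟩ ≤ f j) : Antitone f := by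
  intro a b hab
  have hab' : (a : ℕ) ≤ (b : ℕ) := hab
  exact step_ge h ((b : ℕ) - (a : ℕ)) a b (by omega)

/-! ### The two filter sets -/

/-- the set counted in `idxToPartEven`. -/
def Cset (n : ℕ) {m : ℕ} (p : Fin m → ℤ) (j : Fin m) : Finset (Fin m) :=
  univ.filter fun i : Fin m => i < j ∧ 2 * (n : ℤ) + 1 < p i + p j

lemma mem_Cset {p : Fin m → ℤ} {i j : Fin m} :
    i ∈ Cset n p j ↔ i < j ∧ 2 * (n : ℤ) + 1 < p i + p j := by simp [Cset]

lemma idxToPartEven_apply (p : Fin m → ℤ) (j : Fin m) :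
    idxToPartEven m n p j = 2 * n + 1 - m - p j + ((Cset n p j).card : ℤ) := rfl

/-- the set counted in `partToIdxEven`. -/
def Dset (n : ℕ) {m : ℕ} (lam : Fin m → ℤ) (j : Fin m) : Finset (Fin m) :=
  univ.filter fun i : Fin m =>
    i < j ∧ lam i + lam j ≤ 2 * ((n : ℤ) - m) + ((j : ℕ) : ℤ) - ((i : ℕ) : ℤ)

lemma mem_Dset {lam : Fin m → ℤ} {i j : Fin m} :
    i ∈ Dset n lam j ↔
      i < j ∧ lam i + lam j ≤ 2 * ((n : ℤ) - m) + ((j : ℕ) : ℤ) - ((i : ℕ) : ℤ) := by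
  simp [Dset]

lemma partToIdxEven_apply (lam : Fin m → ℤ) (j : Fin m) :
    partToIdxEven m n lam j = 2 * n + 1 - m - lam j + ((Dset n lam j).card : ℤ) := rfl

/-! ### Direction 1 : p → λ -/

section Dir1

variable {p : Fin m → ℤ} (hsm : StrictMono p) (hb : ∀ j, 1 ≤ p j ∧ p j ≤ 2 * n)
  (hne : ∀ i j, p i + p j ≠ 2 * n + 1)

include hsm

lemma Ccard_le (j : Fin m) : ((Cset n p j).card : ℤ) ≤ ((j : ℕ) : ℤ) := by
  have h1 : Cset n p j ⊆ univ.filter fun i : Fin m => i < j := by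
    intro i hi; rw [mem_Cset] at hi; simp [hi.1]
  have := Finset.card_le_card h1
  rw [card_filter_lt] at this
  exact_mod_cast this

include hb hne in
lemma Ccard_lower0 (j : Fin m) :
    ((j : ℕ) : ℤ) + p j - 2 * n ≤ ((Cset n p j).card : ℤ) := by
  classical
  have hsplit := Finset.card_filter_add_card_filter_not
    (s := univ.filter fun i : Fin m => i < j)
    (p := fun i => 2 * (n : ℤ) + 1 < p i + p j)
  have hC : (univ.filter fun i : Fin m => i < j).filter
      (fun i => 2 * (n : ℤ) + 1 < p i + p j) = Cset n p j := by
    ext i; simp [Cset]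
  set N := (univ.filter fun i : Fin m => i < j).filter
      (fun i => ¬ 2 * (n : ℤ) + 1 < p i + p j) with hN
  have hNb : (N.card : ℤ) ≤ 2 * n - p j := by
    have hmem : ∀ i ∈ N, (1 : ℤ) ≤ p i ∧ p i ≤ 2 * n - p j := by
      intro i hi
      rw [hN, Finset.mem_filter, Finset.mem_filter] at hi
      have h1 := (hb i).1
      have h2 := hne i j
      exact ⟨h1, by omega⟩
    have := card_le_Icc (T := N) (f := p) hsm.injective.injOn
      (a := 1) (b := 2 * n - p j) (by have := (hb j).2; omega) hmem
    linarith
  rw [hC, card_filter_lt] at hsplit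
  omega

include hb hne in
lemma Ccard_lower (i j : Fin m) (hij : i < j) (hsum : p i + p j ≤ 2 * n) :
    ((j : ℕ) : ℤ) - ((i : ℕ) : ℤ) + p i + p j - 2 * n - 1 ≤ ((Cset n p j).card : ℤ) := by
  classical
  have hsplit := Finset.card_filter_add_card_filter_not
    (s := univ.filter fun l : Fin m => l < j)
    (p := fun l => 2 * (n : ℤ) + 1 < p l + p j)
  have hC : (univ.filter fun l : Fin m => l < j).filter
      (fun l => 2 * (n : ℤ) + 1 < p l + p j) = Cset n p j := by
    ext l; simp [Cset]
  set N := (univ.filter fun l : Fin m => l < j).filter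
      (fun l => ¬ 2 * (n : ℤ) + 1 < p l + p j) with hN
  have hsplit2 := Finset.card_filter_add_card_filter_not
    (s := N) (p := fun l => l < i)
  have hN1 : (N.filter fun l => l < i).card ≤ (i : ℕ) := by
    have hsub : (N.filter fun l => l < i) ⊆ univ.filter fun l : Fin m => l < i := by
      intro l hl; rw [Finset.mem_filter] at hl; simp [hl.2]
    have := Finset.card_le_card hsub
    rwa [card_filter_lt] at this
  have hN2 : (((N.filter fun l => ¬ l < i).card : ℤ)) ≤ 2 * n - p j - p i + 1 := by
    have hmem : ∀ l ∈ (N.filter fun l => ¬ l < i), p i ≤ p l ∧ p l ≤ 2 * n - p j := by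
      intro l hl
      rw [Finset.mem_filter, hN, Finset.mem_filter, Finset.mem_filter] at hl
      have h2 := hne l j
      have hle : p i ≤ p l := hsm.monotone (not_lt.mp hl.2)
      exact ⟨hle, by omega⟩
    have := card_le_Icc (T := (N.filter fun l => ¬ l < i)) (f := p) hsm.injective.injOn
      (a := p i) (b := 2 * n - p j) (by omega) hmem
    linarith
  rw [hC, card_filter_lt] at hsplit
  omega

lemma Ccard_zero (j : Fin m) (hj : p j ≤ n) : (Cset n p j).card = 0 := by
  rw [Finset.card_eq_zero, Finset.eq_empty_iff_forall_notMem]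
  intro i hi
  rw [mem_Cset] at hi
  have := hsm hi.1
  omega

include hne in
lemma Ccard_half (j : Fin m) (hj : (n : ℤ) + 1 ≤ p j) :
    ((Cset n p j).card : ℤ) ≤ p j - n - 1 := by
  have hinj : Set.InjOn (fun i => min (p i) (2 * (n : ℤ) + 1 - p i)) (Cset n p j) := by
    intro a ha b hb' heq
    simp only at heq
    by_contra hab
    have h1 : p a ≠ p b := fun h => hab (hsm.injective h)
    have h2 := hne a b
    omega
  have hmem : ∀ i ∈ Cset n p j,
      2 * (n : ℤ) + 2 - p j ≤ min (p i) (2 * (n : ℤ) + 1 - p i) ∧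
      min (p i) (2 * (n : ℤ) + 1 - p i) ≤ n := by
    intro i hi
    rw [mem_Cset] at hi
    have h1 : p i < p j := hsm hi.1
    have h2 := hi.2
    exact ⟨by simp only [le_min_iff]; omega, by simp only [min_le_iff]; omega⟩
  have := card_le_Icc (T := Cset n p j) (f := fun i => min (p i) (2 * (n : ℤ) + 1 - p i))
    hinj (a := 2 * (n : ℤ) + 2 - p j) (b := n) (by omega) hmem
  linarith

include hne in
lemma Ccard_succ (j j₁ : Fin m) (hj : (j₁ : ℕ) = (j : ℕ) + 1) :
    ((Cset n p j₁).card : ℤ) ≤ ((Cset n p j).card : ℤ) + (p j₁ - p j) := by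
  classical
  have hjj : j < j₁ := by rw [Fin.lt_def]; omega
  have hpj : p j < p j₁ := hsm hjj
  have hsub : Cset n p j ⊆ Cset n p j₁ := by
    intro i hi
    rw [mem_Cset] at hi ⊢
    refine ⟨lt_trans hi.1 hjj, by linarith [hi.2]⟩
  have hsd := Finset.card_sdiff_of_subset hsub
  have hcle := Finset.card_le_card hsub
  have hbound : (((Cset n p j₁ \ Cset n p j).card : ℤ)) ≤ p j₁ - p j := by
    have hinj : Set.InjOn (fun i => if i = j then 2 * (n : ℤ) + 1 - p j else p i)
        ((Cset n p j₁ \ Cset n p j : Finset (Fin m)) : Set (Fin m)) := by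
      intro a ha b hb' heq
      simp only at heq
      by_cases h1 : a = j <;> by_cases h2 : b = j
      · rw [h1, h2]
      · rw [if_pos h1, if_neg h2] at heq
        exact absurd (by linarith : p b + p j = 2 * n + 1) (hne b j)
      · rw [if_neg h1, if_pos h2] at heq
        exact absurd (by linarith : p a + p j = 2 * n + 1) (hne a j)
      · rw [if_neg h1, if_neg h2] at heq
        exact hsm.injective heq
    have hmem : ∀ i ∈ Cset n p j₁ \ Cset n p j,
        2 * (n : ℤ) + 2 - p j₁ ≤ (if i = j then 2 * (n : ℤ) + 1 - p j else p i) ∧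
        (if i = j then 2 * (n : ℤ) + 1 - p j else p i) ≤ 2 * (n : ℤ) + 1 - p j := by
      intro i hi
      rw [Finset.mem_sdiff, mem_Cset, mem_Cset] at hi
      obtain ⟨⟨hi1, hi2⟩, hi3⟩ := hi
      by_cases hij2 : i = j
      · rw [if_pos hij2]
        omega
      · rw [if_neg hij2]
        have hilt : i < j := by
          rw [Fin.lt_def] at hi1 ⊢
          have : (i : ℕ) ≠ (j : ℕ) := fun h => hij2 (Fin.ext h)
          omega
        have : ¬ 2 * (n : ℤ) + 1 < p i + p j := fun h => hi3 ⟨hilt, h⟩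
        have h2 := hne i j
        omega
    have := card_le_Icc (T := Cset n p j₁ \ Cset n p j)
      (f := fun i => if i = j then 2 * (n : ℤ) + 1 - p j else p i)
      hinj (a := 2 * (n : ℤ) + 2 - p j₁) (b := 2 * (n : ℤ) + 1 - p j) (by omega) hmem
    linarith
  omega

include hb hne in
lemma Ccard_equiv (i j : Fin m) (hij : i < j) :
    (2 * (n : ℤ) + 1 < p i + p j) ↔
      ((Cset n p i).card : ℤ) + ((Cset n p j).card : ℤ) ≤
        p i + p j + ((j : ℕ) : ℤ) - ((i : ℕ) : ℤ) - (2 * n + 2) := by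
  classical
  have hvij : (i : ℕ) < (j : ℕ) := hij
  constructor
  · intro hsum
    by_cases hpi : p i ≤ n
    · -- c_i = 0, split c_j
      have hci : (Cset n p i).card = 0 := Ccard_zero hsm i hpi
      have hsplit := Finset.card_filter_add_card_filter_not
        (s := Cset n p j) (p := fun l => l ≤ i)
      have hA : (((Cset n p j).filter fun l => l ≤ i).card : ℤ) ≤ p i + p j - 2 * n - 1 := by
        have hmem : ∀ l ∈ (Cset n p j).filter fun l => l ≤ i,
            2 * (n : ℤ) + 2 - p j ≤ p l ∧ p l ≤ p i := by
          intro l hl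
          rw [Finset.mem_filter, mem_Cset] at hl
          have hle : p l ≤ p i := hsm.monotone hl.2
          have := hl.1.2
          exact ⟨by omega, hle⟩
        have := card_le_Icc (T := (Cset n p j).filter fun l => l ≤ i) (f := p)
          hsm.injective.injOn (a := 2 * (n : ℤ) + 2 - p j) (b := p i) (by omega) hmem
        linarith
      have hB : (((Cset n p j).filter fun l => ¬ l ≤ i).card : ℤ) ≤
          ((j : ℕ) : ℤ) - ((i : ℕ) : ℤ) - 1 := by
        have hsub : ((Cset n p j).filter fun l => ¬ l ≤ i) ⊆
            univ.filter fun l : Fin m => i < l ∧ l < j := by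
          intro l hl
          rw [Finset.mem_filter, mem_Cset] at hl
          simp only [Finset.mem_filter, Finset.mem_univ, true_and]
          exact ⟨not_le.mp hl.2, hl.1.1⟩
        have := Finset.card_le_card hsub
        rw [card_filter_Ioo] at this
        omega
      omega
    · -- both halves
      push_neg at hpi
      have hpj : (n : ℤ) + 1 ≤ p j := by have := hsm hij; omega
      have h1 := Ccard_half hsm hne i (by omega)
      have h2 := Ccard_half hsm hne j hpj
      omega
  · intro h
    by_contra hsum
    have hsum' : p i + p j ≤ 2 * n := by have := hne i j; omega
    have h1 := Ccard_lower hsm hb hne i j hij hsum'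
    have h2 : (0 : ℤ) ≤ ((Cset n p i).card : ℤ) := by positivity
    omega

end Dir1

/-! ### Direction 2 : λ → p -/

section Dir2

variable {lam : Fin m → ℤ} (hanti : Antitone lam) (h0 : ∀ j, 0 ≤ lam j)
  (hup : ∀ j, lam j ≤ 2 * n - m)
  (hstrict : ∀ (j : Fin m) (h : (j : ℕ) + 1 < m),
    (n : ℤ) - m < lam j → lam ⟨(j : ℕ) + 1, h⟩ < lam j)

lemma Dcard_le (j : Fin m) : ((Dset n lam j).card : ℤ) ≤ ((j : ℕ) : ℤ) := by
  have h1 : Dset n lam j ⊆ univ.filter fun i : Fin m => i < j := by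
    intro i hi; rw [mem_Dset] at hi; simp [hi.1]
  have := Finset.card_le_card h1
  rw [card_filter_lt] at this
  exact_mod_cast this

include hanti hstrict in
/-- strict decrease above the diagonal value `n - m`. -/
lemma lam_gap : ∀ (d : ℕ) (l i : Fin m), (i : ℕ) = (l : ℕ) + d →
    (n : ℤ) - m < lam i → lam i + d ≤ lam l := by
  intro d
  induction d with
  | zero => intro l i hd _; have hli : l = i := Fin.ext (by omega); rw [hli]; simp
  | succ d ih =>
    intro l i hd hi
    have hlm : (l : ℕ) + 1 < m := by have := i.isLt; omega
    have h2 : lam i + d ≤ lam ⟨(l : ℕ) + 1, hlm⟩ :=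
      ih ⟨(l : ℕ) + 1, hlm⟩ i (show (i : ℕ) = (l : ℕ) + 1 + d by omega) hi
    have h3 : (n : ℤ) - m < lam ⟨(l : ℕ) + 1, hlm⟩ := by
      have : (0 : ℤ) ≤ (d : ℤ) := by positivity
      linarith
    have h4 := hstrict l hlm (lt_of_lt_of_le h3
      (hanti (show l ≤ ⟨(l : ℕ) + 1, hlm⟩ from by
        rw [Fin.le_def]; exact Nat.le_succ _)))
    push_cast
    linarith

include hanti hstrict in
lemma Dset_full (i j : Fin m) (hij : i < j)
    (h : lam i + lam j ≤ 2 * ((n : ℤ) - m) + ((j : ℕ) : ℤ) - ((i : ℕ) : ℤ)) :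
    ((j : ℕ) : ℤ) - ((i : ℕ) : ℤ) ≤ ((Dset n lam j).card : ℤ) := by
  have hsub : (univ.filter fun l : Fin m => i ≤ l ∧ l < j) ⊆ Dset n lam j := by
    intro l hl
    simp only [Finset.mem_filter, Finset.mem_univ, true_and] at hl
    obtain ⟨hil, hlj⟩ := hl
    rw [mem_Dset]
    refine ⟨hlj, ?_⟩
    by_cases hll : lam l ≤ (n : ℤ) - m
    · have hjl : lam j ≤ lam l := hanti (le_of_lt hlj)
      have hvlj : (l : ℕ) < (j : ℕ) := hlj
      omega
    · push_neg at hll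
      have hgap := lam_gap hanti hstrict ((l : ℕ) - (i : ℕ)) i l
        (by have : (i : ℕ) ≤ (l : ℕ) := hil; omega) hll
      have hc : (((l : ℕ) - (i : ℕ) : ℕ) : ℤ) = ((l : ℕ) : ℤ) - ((i : ℕ) : ℤ) := by
        have : (i : ℕ) ≤ (l : ℕ) := hil
        omega
      have hjl : lam j ≤ lam j := le_refl _
      rw [hc] at hgap
      linarith
  have := Finset.card_le_card hsub
  rw [card_filter_Ico] at this
  have hvij : (i : ℕ) < (j : ℕ) := hij
  omega

include hanti hstrict in
lemma Dset_empty (i j : Fin m) (hij : i < j)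
    (h : 2 * ((n : ℤ) - m) + ((j : ℕ) : ℤ) - ((i : ℕ) : ℤ) < lam i + lam j) :
    (Dset n lam i).card = 0 := by
  have hvij : (i : ℕ) < (j : ℕ) := hij
  have hji : lam j ≤ lam i := hanti (le_of_lt hij)
  have hik : (n : ℤ) - m < lam i := by omega
  rw [Finset.card_eq_zero, Finset.eq_empty_iff_forall_notMem]
  intro l hl
  rw [mem_Dset] at hl
  obtain ⟨hli, hcond⟩ := hl
  have hvli : (l : ℕ) < (i : ℕ) := hli
  have hgap := lam_gap hanti hstrict ((i : ℕ) - (l : ℕ)) l i (by omega) hik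
  have hc : (((i : ℕ) - (l : ℕ) : ℕ) : ℤ) = ((i : ℕ) : ℤ) - ((l : ℕ) : ℤ) := by omega
  rw [hc] at hgap
  omega

include hanti hstrict in
lemma Dset_small (i j : Fin m) (hij : i < j)
    (h : 2 * ((n : ℤ) - m) + ((j : ℕ) : ℤ) - ((i : ℕ) : ℤ) < lam i + lam j) :
    ((Dset n lam j).card : ℤ) ≤ ((j : ℕ) : ℤ) - ((i : ℕ) : ℤ) - 1 := by
  have hvij : (i : ℕ) < (j : ℕ) := hij
  have hji : lam j ≤ lam i := hanti (le_of_lt hij)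
  have hik : (n : ℤ) - m < lam i := by omega
  have hsub : Dset n lam j ⊆ univ.filter fun l : Fin m => i < l ∧ l < j := by
    intro l hl
    rw [mem_Dset] at hl
    obtain ⟨hlj, hcond⟩ := hl
    simp only [Finset.mem_filter, Finset.mem_univ, true_and]
    refine ⟨?_, hlj⟩
    by_contra hli
    have hvli : (l : ℕ) ≤ (i : ℕ) := by
      rw [Fin.lt_def] at hli; omega
    have hgap := lam_gap hanti hstrict ((i : ℕ) - (l : ℕ)) l i (by omega) hik
    have hc : (((i : ℕ) - (l : ℕ) : ℕ) : ℤ) = ((i : ℕ) : ℤ) - ((l : ℕ) : ℤ) := by omega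
    rw [hc] at hgap
    omega
  have := Finset.card_le_card hsub
  rw [card_filter_Ioo] at this
  omega

end Dir2

end EvenSympAux

open EvenSympAux in
/-- The map `p ↦ λ` is a bijection between index sets for `IG(m, 2n)` and
`(n−m)`-strict partitions `λ` with `λ₁ ≤ 2n−m`, `λ_m ≥ 0`, with the stated inverse. -/
theorem even_symplectic_index_partition_bijection (m n : ℕ) (hm : 0 < m) (hmn : m ≤ n) :
    (∀ p : Fin m → ℤ, IsIndexSetEven m n p →
      IsStrictPartitionEven m n (idxToPartEven m n p) ∧
        partToIdxEven m n (idxToPartEven m n p) = p) ∧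
    (∀ lam : Fin m → ℤ, IsStrictPartitionEven m n lam →
      IsIndexSetEven m n (partToIdxEven m n lam) ∧
        idxToPartEven m n (partToIdxEven m n lam) = lam) := by
  constructor
  · -- Direction 1
    rintro p ⟨hsm, hb, hne⟩
    set lam := idxToPartEven m n p with hlam
    have hlam_apply : ∀ j, lam j = 2 * n + 1 - m - p j + ((Cset n p j).card : ℤ) :=
      fun j => rfl
    -- adjacent antitone
    have hadj : ∀ (j : Fin m) (hj : (j : ℕ) + 1 < m), lam ⟨(j : ℕ) + 1, hj⟩ ≤ lam j := by
      intro j hj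
      have hsucc := Ccard_succ hsm hne j ⟨(j : ℕ) + 1, hj⟩ rfl
      rw [hlam_apply, hlam_apply]
      omega
    have hanti : Antitone lam := antitone_of_adj hadj
    have hpos : ∀ j, 0 ≤ lam j := by
      intro j
      have hlast : (0 : ℤ) ≤ lam ⟨m - 1, by omega⟩ := by
        rw [hlam_apply]
        have := Ccard_lower0 hsm hb hne ⟨m - 1, by omega⟩
        have hble := (hb ⟨m - 1, by omega⟩).2
        have hc : ((⟨m - 1, by omega⟩ : Fin m) : ℕ) = m - 1 := rfl
        rw [hc] at this
        omega
      have := hanti (a := j) (b := ⟨m - 1, by omega⟩) (by rw [Fin.le_def]; have := j.isLt; simp; omega)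
      linarith
    have hple : ∀ j : Fin m, ((j : ℕ) : ℤ) + 1 ≤ p j := by
      intro j
      have := step_le (f := p)
        (fun l hl => by
          have : l < (⟨(l : ℕ) + 1, hl⟩ : Fin m) := by rw [Fin.lt_def]; simp
          have := hsm this; omega)
        ((j : ℕ)) ⟨0, hm⟩ j (by simp)
      have h1 := (hb ⟨0, hm⟩).1
      omega
    have hub : ∀ j, lam j ≤ 2 * n - m := by
      intro j
      rw [hlam_apply]
      have h1 := Ccard_le hsm (n := n) j
      have h2 := hple j
      have h3 : (j : ℕ) + 1 ≤ m := j.isLt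
      have h4 : ((j : ℕ) : ℤ) + 1 ≤ (m : ℤ) := by exact_mod_cast h3
      omega
    have hstrict : ∀ (j : Fin m) (h : (j : ℕ) + 1 < m),
        (n : ℤ) - m < lam j → lam ⟨(j : ℕ) + 1, h⟩ < lam j := by
      intro j hj hgt
      by_contra hle
      push_neg at hle
      have heq : lam ⟨(j : ℕ) + 1, hj⟩ = lam j := le_antisymm (hadj j hj) hle
      set j₁ : Fin m := ⟨(j : ℕ) + 1, hj⟩ with hj₁
      have hjj : j < j₁ := by rw [Fin.lt_def]; simp [hj₁]
      have hpj : p j < p j₁ := hsm hjj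
      -- from equality of lam's: c_{j1} = c_j + (p_{j1} - p_j)
      have hceq : ((Cset n p j₁).card : ℤ) = ((Cset n p j).card : ℤ) + (p j₁ - p j) := by
        have e1 := hlam_apply j
        have e2 := hlam_apply j₁
        rw [heq] at e2
        omega
      -- lam j > n - m gives c_j ≥ p_j - n
      have hcj : p j - (n : ℤ) ≤ ((Cset n p j).card : ℤ) := by
        have := hlam_apply j
        omega
      by_cases hpn : p j ≤ n
      · have hc0 : (Cset n p j).card = 0 := Ccard_zero hsm j hpn
        have hpos' : (0 : ℤ) < ((Cset n p j₁).card : ℤ) := by omega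
        have hne' : (Cset n p j₁).Nonempty := by
          rw [← Finset.card_pos]
          exact_mod_cast hpos'
        obtain ⟨l, hl⟩ := hne'
        rw [mem_Cset] at hl
        have hlj : p l ≤ p j := by
          have : l ≤ j := by
            rw [Fin.le_def]
            have : (l : ℕ) < (j₁ : ℕ) := hl.1
            simp [hj₁] at this
            omega
          exact hsm.monotone this
        have hbound : ((Cset n p j₁).card : ℤ) ≤ p j + p j₁ - 2 * n - 1 := by
          have hmem : ∀ l' ∈ Cset n p j₁, 2 * (n : ℤ) + 2 - p j₁ ≤ p l' ∧ p l' ≤ p j := by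
            intro l' hl'
            rw [mem_Cset] at hl'
            have hlj' : p l' ≤ p j := by
              have : l' ≤ j := by
                rw [Fin.le_def]
                have : (l' : ℕ) < (j₁ : ℕ) := hl'.1
                simp [hj₁] at this
                omega
              exact hsm.monotone this
            have := hl'.2
            exact ⟨by omega, hlj'⟩
          have := card_le_Icc (T := Cset n p j₁) (f := p) hsm.injective.injOn
            (a := 2 * (n : ℤ) + 2 - p j₁) (b := p j) (by omega) hmem
          linarith
        omega
      · push_neg at hpn
        have := Ccard_half hsm hne j (by omega)
        omega
    refine ⟨⟨hanti, hpos, hub, hstrict⟩, ?_⟩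
    -- inverse identity
    funext j
    have hDC : Dset n lam j = Cset n p j := by
      ext i
      rw [mem_Dset, mem_Cset]
      constructor
      · rintro ⟨hij, hcond⟩
        refine ⟨hij, ?_⟩
        rw [(Ccard_equiv hsm hb hne i j hij)]
        have e1 := hlam_apply i
        have e2 := hlam_apply j
        omega
      · rintro ⟨hij, hcond⟩
        refine ⟨hij, ?_⟩
        have := (Ccard_equiv hsm hb hne i j hij).mp hcond
        have e1 := hlam_apply i
        have e2 := hlam_apply j
        omega
    rw [partToIdxEven_apply, hDC]
    have := hlam_apply j
    omega
  · -- Direction 2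
    rintro lam ⟨hanti, h0, hup, hstrict⟩
    set p := partToIdxEven m n lam with hp
    have hp_apply : ∀ j, p j = 2 * n + 1 - m - lam j + ((Dset n lam j).card : ℤ) :=
      fun j => rfl
    have hmZ : (1 : ℤ) ≤ (m : ℤ) := by exact_mod_cast hm
    have hmnZ : (m : ℤ) ≤ (n : ℤ) := by exact_mod_cast hmn
    -- adjacent strict monotonicity
    have hadj : ∀ (j : Fin m) (hj : (j : ℕ) + 1 < m), p j < p ⟨(j : ℕ) + 1, hj⟩ := by
      intro j hj
      set j₁ : Fin m := ⟨(j : ℕ) + 1, hj⟩ with hj₁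
      show p j < p j₁
      have hjj : j < j₁ := by rw [Fin.lt_def]; simp [hj₁]
      have hlle : lam j₁ ≤ lam j := hanti (le_of_lt hjj)
      have hsub : Dset n lam j ⊆ Dset n lam j₁ := by
        intro i hi
        rw [mem_Dset] at hi ⊢
        obtain ⟨hij, hcond⟩ := hi
        have hv : (j₁ : ℕ) = (j : ℕ) + 1 := rfl
        refine ⟨lt_trans hij hjj, ?_⟩
        rw [hv]
        push_cast
        omega
      by_cases hl : lam j₁ = lam j
      · -- lam j ≤ n - m, can insert j
        have hjk : lam j ≤ (n : ℤ) - m := by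
          by_contra hgt
          push_neg at hgt
          have hcon := hstrict j hj hgt
          rw [← hj₁] at hcon
          omega
        have hmem : j ∈ Dset n lam j₁ := by
          rw [mem_Dset]
          refine ⟨hjj, ?_⟩
          have hv : (j₁ : ℕ) = (j : ℕ) + 1 := rfl
          rw [hv]
          push_cast
          omega
        have hnotmem : j ∉ Dset n lam j := by
          rw [mem_Dset]
          simp
        have hins : insert j (Dset n lam j) ⊆ Dset n lam j₁ := by
          intro i hi
          rcases Finset.mem_insert.mp hi with h | h
          · rw [h]; exact hmem
          · exact hsub h
        have hcard := Finset.card_le_card hins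
        rw [Finset.card_insert_of_notMem hnotmem] at hcard
        have := hp_apply j
        have := hp_apply j₁
        omega
      · have hlt : lam j₁ < lam j := lt_of_le_of_ne hlle hl
        have hcard := Finset.card_le_card hsub
        have := hp_apply j
        have := hp_apply j₁
        omega
    have hsm : StrictMono p := strictMono_of_adj hadj
    have hbnd : ∀ j, 1 ≤ p j ∧ p j ≤ 2 * n := by
      intro j
      have h1 := hup j
      have h2 := h0 j
      have h3 : (0 : ℤ) ≤ ((Dset n lam j).card : ℤ) := by positivity
      have h4 := Dcard_le (lam := lam) (n := n) j
      have h5 : (j : ℕ) + 1 ≤ m := j.isLt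
      have h6 : ((j : ℕ) : ℤ) + 1 ≤ (m : ℤ) := by exact_mod_cast h5
      rw [hp_apply]
      constructor <;> omega
    -- key: for i < j, the sum p i + p j is on the correct side
    have hkey : ∀ i j : Fin m, i < j →
        ((lam i + lam j ≤ 2 * ((n : ℤ) - m) + ((j : ℕ) : ℤ) - ((i : ℕ) : ℤ)) →
          2 * (n : ℤ) + 1 < p i + p j) ∧
        ((2 * ((n : ℤ) - m) + ((j : ℕ) : ℤ) - ((i : ℕ) : ℤ) < lam i + lam j) →
          p i + p j < 2 * (n : ℤ) + 1) := by
      intro i j hij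
      have hvij : (i : ℕ) < (j : ℕ) := hij
      have e1 := hp_apply i
      have e2 := hp_apply j
      constructor
      · intro hcond
        have hfull := Dset_full hanti hstrict i j hij hcond
        have h3 : (0 : ℤ) ≤ ((Dset n lam i).card : ℤ) := by positivity
        omega
      · intro hcond
        have hempty := Dset_empty hanti hstrict i j hij hcond
        have hsmall := Dset_small hanti hstrict i j hij hcond
        omega
    have hne : ∀ i j, p i + p j ≠ 2 * n + 1 := by
      intro i j
      rcases lt_trichotomy i j with h | h | h
      · rcases (hkey i j h) with ⟨k1, k2⟩
        by_cases hc : lam i + lam j ≤ 2 * ((n : ℤ) - m) + ((j : ℕ) : ℤ) - ((i : ℕ) : ℤ)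
        · have := k1 hc; omega
        · push_neg at hc
          have := k2 hc; omega
      · rw [h]; omega
      · rcases (hkey j i h) with ⟨k1, k2⟩
        by_cases hc : lam j + lam i ≤ 2 * ((n : ℤ) - m) + ((i : ℕ) : ℤ) - ((j : ℕ) : ℤ)
        · have := k1 hc; omega
        · push_neg at hc
          have := k2 hc; omega
    refine ⟨⟨hsm, hbnd, hne⟩, ?_⟩
    funext j
    have hCD : Cset n p j = Dset n lam j := by
      ext i
      rw [mem_Cset, mem_Dset]
      constructor
      · rintro ⟨hij, hcond⟩
        refine ⟨hij, ?_⟩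
        by_contra hc
        push_neg at hc
        have := (hkey i j hij).2 hc
        omega
      · rintro ⟨hij, hcond⟩
        exact ⟨hij, (hkey i j hij).1 hcond⟩
    rw [show idxToPartEven m n p j
        = 2 * n + 1 - m - p j + ((Cset n p j).card : ℤ) from rfl, hCD]
    have := hp_apply j
    omega
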